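/- Averaging conjugation by U ⊗ U over the Haar measure on the unitary group of a d-dimensional space A sends any operator Y on A ⊗ A to α·I + β·F, where the scalars satisfy α d² + β d = Tr[Y] and α d + β d² = Tr[Y F]. -/

import Mathlib

open scoped Kronecker
open Matrix MeasureTheory
open scoped ComplexOrder
open scoped ENNReal

noncomputable section

instance matMeasurableSpace {n m : Type*} : MeasurableSpace (Matrix n m ℂ) :=
  inferInstanceAs (MeasurableSpace (n → m → ℂ))

instance unitaryMeasurableSpace {n : Type*} [Fintype n] [DecidableEq n] :
    MeasurableSpace (Matrix.unitaryGroup n ℂ) :=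
  inferInstanceAs (MeasurableSpace {U : Matrix n n ℂ // U ∈ Matrix.unitaryGroup n ℂ})

variable {n : Type*} [Fintype n] [DecidableEq n]

/-- Functional calculus for Hermitian matrices (junk value `0` otherwise). -/
def hfun (f : ℝ → ℝ) (X : Matrix n n ℂ) : Matrix n n ℂ :=
  if hX : X.IsHermitian then
    (hX.eigenvectorUnitary : Matrix n n ℂ) *
      Matrix.diagonal (fun i => (f (hX.eigenvalues i) : ℂ)) *
      (star (hX.eigenvectorUnitary : Matrix n n ℂ))
  else 0

/-- Real matrix power via spectral calculus, with the pseudo-inverse convention `0 ^ t = 0`. -/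
def mpow (X : Matrix n n ℂ) (t : ℝ) : Matrix n n ℂ :=
  hfun (fun x => if x = 0 then 0 else Real.rpow x t) X

/-- Matrix logarithm on the support. -/
def mlog (X : Matrix n n ℂ) : Matrix n n ℂ :=
  hfun (fun x => if x = 0 then 0 else Real.log x) X

/-- Trace norm (Schatten 1-norm). -/
def traceNorm (X : Matrix n n ℂ) : ℝ :=
  (((Matrix.posSemidef_conjTranspose_mul_self X).1.eigenvectorUnitary : Matrix n n ℂ) *
    Matrix.diagonal (((↑) : ℝ → ℂ) ∘ (√·) ∘ (Matrix.posSemidef_conjTranspose_mul_self X).1.eigenvalues) *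
    (star ((Matrix.posSemidef_conjTranspose_mul_self X).1.eigenvectorUnitary : Matrix n n ℂ))).trace.re

/-- Squared Hilbert–Schmidt (Schatten 2) norm. -/
def hsNormSq (X : Matrix n n ℂ) : ℝ := ∑ i, ∑ j, ‖X i j‖ ^ 2

/-- Operator norm (Schatten ∞-norm): square root of the top eigenvalue of `Xᴴ * X`. -/
def opNorm (X : Matrix n n ℂ) : ℝ :=
  ⨆ i, Real.sqrt ((Matrix.posSemidef_conjTranspose_mul_self X).1.eigenvalues i)

/-- Schatten `α`-norm for real `α`. -/
def schattenR (α : ℝ) (X : Matrix n n ℂ) : ℝ :=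
  ((mpow (Xᴴ * X) (α / 2)).trace.re) ^ (1 / α)

/-- Partial trace over the first tensor factor. -/
def ptrFst {a b : Type*} [Fintype a] (X : Matrix (a × b) (a × b) ℂ) : Matrix b b ℂ :=
  Matrix.of fun j j' => ∑ i, X (i, j) (i, j')

/-- A density operator. -/
def IsDensity (X : Matrix n n ℂ) : Prop := X.PosSemidef ∧ X.trace = 1

/-- Swap (flip) operator on `A ⊗ A`. -/
def swapM (a : Type*) [Fintype a] [DecidableEq a] : Matrix (a × a) (a × a) ℂ :=
  Matrix.of fun p q => if p.1 = q.2 ∧ p.2 = q.1 then 1 else 0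

/-- Normalized maximally entangled state `Φ = (1/d) Σ_{i j} |ii⟩⟨jj|`. -/
def phiM (a : Type*) [Fintype a] [DecidableEq a] : Matrix (a × a) (a × a) ℂ :=
  Matrix.of fun p q => if p.1 = p.2 ∧ q.1 = q.2 then ((Fintype.card a : ℂ))⁻¹ else 0

/-- Non-normalized maximally entangled operator `Φ̃ = Σ_{i j} |ii⟩⟨jj|`. -/
def phiTilde (a : Type*) [Fintype a] [DecidableEq a] : Matrix (a × a) (a × a) ℂ :=
  Matrix.of fun p q => if p.1 = p.2 ∧ q.1 = q.2 then 1 else 0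

/-- Entrywise integral of a matrix-valued function. -/
def mInt {G : Type*} [MeasurableSpace G] (μ : Measure G)
    (f : G → Matrix n n ℂ) : Matrix n n ℂ :=
  Matrix.of fun i j => ∫ x, f x i j ∂μ

/-- Choi state (normalized Choi–Jamiołkowski matrix) of a map `T`, on `A' ⊗ C`. -/
def choiM {a c : Type*} [Fintype a] [DecidableEq a]
    (T : Matrix a a ℂ → Matrix c c ℂ) : Matrix (a × c) (a × c) ℂ :=
  Matrix.of fun p q =>
    ((Fintype.card a : ℂ))⁻¹ * (T (Matrix.single p.1 q.1 1)) p.2 q.2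

/-- The extension `T ⊗ id_E` of a map `T : B(A) → B(C)` applied to an operator on `A ⊗ E`. -/
def tensorExt {a c e : Type*} [Fintype a] [DecidableEq a]
    (T : Matrix a a ℂ → Matrix c c ℂ) (ρ : Matrix (a × e) (a × e) ℂ) :
    Matrix (c × e) (c × e) ℂ :=
  Matrix.of fun p q => ∑ i, ∑ j,
    (T (Matrix.single i j 1)) p.1 q.1 * ρ (i, p.2) (j, q.2)

/-- `T` is trace preserving. -/
def IsTracePreserving {a c : Type*} [Fintype a] [Fintype c]
    (T : Matrix a a ℂ → Matrix c c ℂ) : Prop :=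
  ∀ X, (T X).trace = X.trace

/-- The decoupling map `Θ(Y)(U) = d² ⟨Φ_{A'A}| (1 ⊗ U ⊗ 1) Y (1 ⊗ U† ⊗ 1) |Φ_{A'A}⟩`,
where `Y` is an operator on `A' ⊗ A ⊗ R` (with `R` e.g. `C ⊗ E`). -/
def Theta {a r : Type*} [Fintype a] [DecidableEq a] [Fintype r] [DecidableEq r]
    (Y : Matrix ((a × a) × r) ((a × a) × r) ℂ) (U : Matrix.unitaryGroup a ℂ) :
    Matrix r r ℂ :=
  (Fintype.card a : ℂ) • Matrix.of fun x y => ∑ i, ∑ j,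
    ((((1 : Matrix a a ℂ) ⊗ₖ (U : Matrix a a ℂ)) ⊗ₖ (1 : Matrix r r ℂ)) * Y *
      ((((1 : Matrix a a ℂ) ⊗ₖ (U : Matrix a a ℂ)) ⊗ₖ (1 : Matrix r r ℂ))ᴴ)) ((i, i), x) ((j, j), y)

/-- The completely depolarizing map acting on the `A` factor of `A' ⊗ A ⊗ R`. -/
def depolA {a r : Type*} [Fintype a] [DecidableEq a]
    (Y : Matrix ((a × a) × r) ((a × a) × r) ℂ) : Matrix ((a × a) × r) ((a × a) × r) ℂ :=
  Matrix.of fun p q =>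
    if p.1.2 = q.1.2 then
      ((Fintype.card a : ℂ))⁻¹ * ∑ k, Y ((p.1.1, k), p.2) ((q.1.1, k), q.2)
    else 0

/-- Sandwiched Rényi divergence `D*_α(ρ ‖ τ) = (1/(α-1)) log Tr[(τ^{(1-α)/(2α)} ρ τ^{(1-α)/(2α)})^α]`. -/
def sandD {m : Type*} [Fintype m] [DecidableEq m] (α : ℝ) (ρ τ : Matrix m m ℂ) : ℝ :=
  (α - 1)⁻¹ * Real.log
    ((mpow (mpow τ ((1 - α) / (2 * α)) * ρ * mpow τ ((1 - α) / (2 * α))) α).trace.re)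

/-- Sandwiched Rényi conditional entropy
`H*_α(A|B)_ρ = - inf_{σ_B density} D*_α(ρ ‖ 1 ⊗ σ_B)`, conditioning on the second factor. -/
def condSand {a b : Type*} [Fintype a] [DecidableEq a] [Fintype b] [DecidableEq b]
    (α : ℝ) (ρ : Matrix (a × b) (a × b) ℂ) : ℝ :=
  - sInf ((fun σ : Matrix b b ℂ => sandD α ρ ((1 : Matrix a a ℂ) ⊗ₖ σ)) '' {σ | IsDensity σ})

/-- Petz–Rényi conditional entropy
`H_α^↓(A|B)_ρ = (1/(1-α)) log Tr[ρ^α (1 ⊗ ρ_B)^{1-α}]`, conditioning on the second factor. -/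
def petzCond {a b : Type*} [Fintype a] [DecidableEq a] [Fintype b] [DecidableEq b]
    (α : ℝ) (ρ : Matrix (a × b) (a × b) ℂ) : ℝ :=
  (1 - α)⁻¹ * Real.log
    ((mpow ρ α * mpow ((1 : Matrix a a ℂ) ⊗ₖ ptrFst ρ) (1 - α)).trace.re)

/-- Conditional von Neumann entropy `H(A|B)_ρ`. -/
def condVN {a b : Type*} [Fintype a] [DecidableEq a] [Fintype b] [DecidableEq b]
    (ρ : Matrix (a × b) (a × b) ℂ) : ℝ :=
  - ((ρ * (mlog ρ - mlog ((1 : Matrix a a ℂ) ⊗ₖ ptrFst ρ))).trace.re)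


namespace Tw
variable {a : Type*} [Fintype a] [DecidableEq a]

def W (U : Matrix a a ℂ) : Matrix (a × a) (a × a) ℂ := U ⊗ₖ U

lemma W_apply (U : Matrix a a ℂ) (p q : a × a) : W U p q = U p.1 q.1 * U p.2 q.2 := rfl

lemma W_mul (U V : Matrix a a ℂ) : W (U * V) = W U * W V := Matrix.mul_kronecker_mul U V U V

lemma kron_conjT (A B : Matrix a a ℂ) : (A ⊗ₖ B)ᴴ = Aᴴ ⊗ₖ Bᴴ := by
  ext p q
  simp [Matrix.conjTranspose_apply, Matrix.kroneckerMap_apply]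

lemma W_conjT (U : Matrix a a ℂ) : (W U)ᴴ = W Uᴴ := kron_conjT U U

lemma swap_mul (Z : Matrix (a × a) (a × a) ℂ) :
    swapM a * Z = Matrix.of fun p q => Z (p.2, p.1) q := by
  ext p q
  rw [Matrix.mul_apply, Finset.sum_eq_single ((p.2, p.1) : a × a)]
  · simp [swapM]
  · rintro ⟨b1, b2⟩ - hb
    simp only [swapM, Matrix.of_apply, ite_mul, one_mul, zero_mul, ite_eq_right_iff]
    rintro ⟨h1, h2⟩
    exact absurd (Prod.ext h2.symm h1.symm) hb
  · simp

lemma mul_swap (Z : Matrix (a × a) (a × a) ℂ) :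
    Z * swapM a = Matrix.of fun p q => Z p (q.2, q.1) := by
  ext p q
  rw [Matrix.mul_apply, Finset.sum_eq_single ((q.2, q.1) : a × a)]
  · simp [swapM]
  · rintro ⟨b1, b2⟩ - hb
    simp only [swapM, Matrix.of_apply, mul_ite, mul_one, mul_zero, ite_eq_right_iff]
    rintro ⟨h1, h2⟩
    exact absurd (Prod.ext h1 h2) hb
  · simp

lemma swap_conjT : (swapM a)ᴴ = swapM a := by
  ext p q
  simp only [Matrix.conjTranspose_apply, swapM, Matrix.of_apply, apply_ite (star : ℂ → ℂ), star_one, star_zero]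
  refine if_congr ?_ rfl rfl
  constructor <;> rintro ⟨h1, h2⟩ <;> exact ⟨h2.symm, h1.symm⟩

lemma swap_mul_swap : swapM a * swapM a = 1 := by
  rw [swap_mul]
  ext p q
  simp only [Matrix.of_apply, swapM, Matrix.one_apply, Prod.ext_iff]
  refine if_congr ?_ rfl rfl
  tauto

lemma swap_comm_kron (X : Matrix a a ℂ) : swapM a * (X ⊗ₖ X) = (X ⊗ₖ X) * swapM a := by
  rw [swap_mul, mul_swap]
  ext p q
  simp [Matrix.kroneckerMap_apply, mul_comm]

lemma swap_trace : (swapM a).trace = (Fintype.card a : ℂ) := by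
  rw [Matrix.trace, Fintype.sum_prod_type]
  simp [Matrix.diag, swapM, Finset.sum_ite_eq, eq_comm]


lemma W_unitary_left (U : Matrix.unitaryGroup a ℂ) :
    (W (U : Matrix a a ℂ))ᴴ * W (U : Matrix a a ℂ) = 1 := by
  rw [W_conjT, ← W_mul]
  have h : (U : Matrix a a ℂ)ᴴ * U = 1 := by
    have := U.prop
    rw [Matrix.mem_unitaryGroup_iff'] at this
    simpa [Matrix.star_eq_conjTranspose] using this
  rw [h]
  exact Matrix.one_kronecker_one

lemma W_unitary_right (U : Matrix.unitaryGroup a ℂ) :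
    W (U : Matrix a a ℂ) * (W (U : Matrix a a ℂ))ᴴ = 1 := by
  rw [W_conjT, ← W_mul]
  have h : (U : Matrix a a ℂ) * Uᴴ = 1 := by
    have := U.prop
    rw [Matrix.mem_unitaryGroup_iff] at this
    simpa [Matrix.star_eq_conjTranspose] using this
  rw [h]
  exact Matrix.one_kronecker_one

/-- diagonal unitary with `I` at position `m` -/
def diagU (m : a) : Matrix.unitaryGroup a ℂ :=
  ⟨Matrix.diagonal (fun k => if k = m then Complex.I else 1), by
    rw [Matrix.mem_unitaryGroup_iff, Matrix.star_eq_conjTranspose,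
      Matrix.diagonal_conjTranspose, Matrix.diagonal_mul_diagonal]
    convert Matrix.diagonal_one with k
    by_cases h : k = m <;> simp [h, Complex.mul_conj']⟩

/-- permutation unitary -/
def permU (σ : Equiv.Perm a) : Matrix.unitaryGroup a ℂ :=
  ⟨Matrix.of fun x y => if x = σ y then 1 else 0, by
    rw [Matrix.mem_unitaryGroup_iff, Matrix.star_eq_conjTranspose]
    ext x y
    rw [Matrix.mul_apply]
    rw [Finset.sum_eq_single (σ.symm x)]
    · by_cases h : x = y
      · subst h
        simp [Matrix.conjTranspose_apply, Matrix.one_apply]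
      · simp [Matrix.conjTranspose_apply, Matrix.one_apply, h, Ne.symm h]
    · intro b _ hb
      have hxb : ¬ x = σ b := fun hc => hb (by simp [hc])
      simp [Matrix.conjTranspose_apply, Matrix.of_apply, hxb]
    · simp⟩


lemma sum_two {a0 a1 : a} (h : a0 ≠ a1) (u v : ℂ) (f : a → ℂ) :
    (∑ k, (if k = a0 then u else if k = a1 then v else 0) * f k) = u * f a0 + v * f a1 := by
  have key : ∀ k, (if k = a0 then u else if k = a1 then v else 0) * f k =
      (if k = a0 then u * f k else 0) + (if k = a1 then v * f k else 0) := by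
    intro k
    by_cases h0 : k = a0
    · subst h0; simp [h]
    · by_cases h1 : k = a1
      · subst h1; simp [h0, Ne.symm h]
      · simp [h0, h1]
  simp_rw [key]
  rw [Finset.sum_add_distrib, Finset.sum_ite_eq', Finset.sum_ite_eq']
  simp

def sC : ℂ := (Complex.ofReal (Real.sqrt 2))⁻¹

lemma sC_conj : (starRingEnd ℂ) sC = sC := by
  simp [sC, ← Complex.ofReal_inv]

lemma sC_sq : sC * sC = (2 : ℂ)⁻¹ := by
  rw [sC, ← mul_inv, ← Complex.ofReal_mul, Real.mul_self_sqrt (by norm_num)]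
  norm_num

lemma sC_sq_add : sC * sC + sC * sC = 1 := by
  rw [sC_sq]; norm_num

lemma sC_ne : sC ≠ 0 := by
  have h2 : Real.sqrt 2 ≠ 0 := by positivity
  simp [sC, Complex.ofReal_ne_zero, h2]

/-- Hadamard-type matrix mixing coordinates a0 a1. -/
def hadM (a0 a1 : a) : Matrix a a ℂ :=
  Matrix.of fun i j =>
    if i = a0 then (if j = a0 then sC else if j = a1 then sC else 0)
    else if i = a1 then (if j = a0 then sC else if j = a1 then -sC else 0)
    else if j = i then 1 else 0

lemma hadM_col0 {a0 a1 : a} (h : a0 ≠ a1) (k : a) :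
    hadM a0 a1 k a0 = (if k = a0 then sC else if k = a1 then sC else 0) := by
  by_cases h0 : k = a0
  · subst h0; simp [hadM]
  · by_cases h1 : k = a1
    · subst h1; simp [hadM, h0]
    · simp [hadM, h0, h1, Ne.symm h0]

lemma hadM_col1 {a0 a1 : a} (h : a0 ≠ a1) (k : a) :
    hadM a0 a1 k a1 = (if k = a0 then sC else if k = a1 then -sC else 0) := by
  by_cases h0 : k = a0
  · subst h0; simp [hadM, Ne.symm h]
  · by_cases h1 : k = a1
    · subst h1; simp [hadM, h0]
    · simp [hadM, h0, h1, Ne.symm h1]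

def hadU {a0 a1 : a} (h : a0 ≠ a1) : Matrix.unitaryGroup a ℂ :=
  ⟨hadM a0 a1, by
    rw [Matrix.mem_unitaryGroup_iff, Matrix.star_eq_conjTranspose]
    ext i j
    rw [Matrix.mul_apply]
    simp only [Matrix.conjTranspose_apply]
    by_cases hi0 : i = a0
    · subst hi0
      have hrow : ∀ k, hadM i a1 i k = (if k = i then sC else if k = a1 then sC else 0) := by
        intro k; simp [hadM]
      simp_rw [hrow]
      rw [sum_two h, hadM_col0 h j, hadM_col1 h j]
      by_cases hj0 : j = i
      · subst hj0
        simp [sC_conj, Matrix.one_apply, sC_sq_add]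
      · by_cases hj1 : j = a1
        · subst hj1
          simp [sC_conj, Matrix.one_apply, Ne.symm h, h, hj0]
        · simp [Matrix.one_apply, hj0, hj1, Ne.symm hj0]
    · by_cases hi1 : i = a1
      · subst hi1
        have hrow : ∀ k, hadM a0 i i k = (if k = a0 then sC else if k = i then -sC else 0) := by
          intro k; simp [hadM, Ne.symm h]
        simp_rw [hrow]
        rw [sum_two h, hadM_col0 h j, hadM_col1 h j]
        by_cases hj0 : j = a0
        · subst hj0
          simp [sC_conj, Matrix.one_apply, Ne.symm h, h]
          try ring
        · by_cases hj1 : j = i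
          · subst hj1
            simp [sC_conj, Matrix.one_apply, Ne.symm h]
            linear_combination sC_sq_add
          · simp [Matrix.one_apply, hj0, hj1, Ne.symm hj1]
      · have hrow : ∀ k, hadM a0 a1 i k = (if k = i then 1 else 0) := by
          intro k; simp [hadM, hi0, hi1]
        simp_rw [hrow, ite_mul, one_mul, zero_mul]
        rw [Finset.sum_ite_eq']
        by_cases hj0 : j = a0
        · subst hj0
          simp [hadM, Matrix.one_apply, hi0, hi1]
        · by_cases hj1 : j = a1
          · subst hj1
            simp [hadM, Matrix.one_apply, hi0, hi1, Ne.symm h]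
          · by_cases hij : i = j
            · subst hij; simp [hadM, Matrix.one_apply, hi0, hi1]
            · simp [hadM, Matrix.one_apply, hj0, hj1, hij, Ne.symm hij]⟩

lemma W_diag (c : a → ℂ) :
    W (Matrix.diagonal c) = Matrix.diagonal (fun p : a × a => c p.1 * c p.2) := by
  ext p q
  by_cases h1 : p.1 = q.1 <;> by_cases h2 : p.2 = q.2 <;>
    simp [W_apply, Matrix.diagonal_apply, Prod.ext_iff, h1, h2]

lemma permU_W_apply (σ : Equiv.Perm a) (x y : a × a) :
    W ((permU σ : Matrix a a ℂ)) x y = if x.1 = σ y.1 ∧ x.2 = σ y.2 then 1 else 0 := by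
  by_cases h1 : x.1 = σ y.1 <;> by_cases h2 : x.2 = σ y.2 <;>
    simp [W_apply, permU, h1, h2]

theorem comm_structure {a0 a1 : a} (h01 : a0 ≠ a1) {M : Matrix (a × a) (a × a) ℂ}
    (hM : ∀ V : Matrix.unitaryGroup a ℂ,
      W (V : Matrix a a ℂ) * M = M * W (V : Matrix a a ℂ)) :
    M = M (a0,a1) (a0,a1) • (1 : Matrix (a × a) (a × a) ℂ) + M (a0,a1) (a1,a0) • swapM a := by
  have fI1 : (Complex.I : ℂ) ≠ 1 := by
    intro hc
    have := congrArg Complex.im hc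
    simp at this
  have fn1I : (-1 : ℂ) ≠ Complex.I := by
    intro hc
    have := congrArg Complex.im hc
    simp at this
  have fIn1 : (Complex.I : ℂ) ≠ -1 := fun hc => fn1I hc.symm
  -- diagonal relation
  have hdiag : ∀ (m : a) (p q : a × a),
      ((if p.1 = m then Complex.I else 1) * (if p.2 = m then Complex.I else 1)) * M p q
        = M p q * ((if q.1 = m then Complex.I else 1) * (if q.2 = m then Complex.I else 1)) := by
    intro m p q
    have h := hM (diagU m)
    have hc : ((diagU m : Matrix a a ℂ)) = Matrix.diagonal (fun k => if k = m then Complex.I else 1) := rfl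
    rw [hc, W_diag] at h
    have h2 := congrFun (congrFun h p) q
    rwa [Matrix.diagonal_mul, Matrix.mul_diagonal] at h2
  -- zero pattern
  have hzero : ∀ i j k l : a, ¬((k = i ∧ l = j) ∨ (k = j ∧ l = i)) → M (i,j) (k,l) = 0 := by
    intro i j k l hno
    by_contra hne
    have hrel : ∀ m : a, ((if i = m then Complex.I else 1) * (if j = m then Complex.I else 1))
        = ((if k = m then Complex.I else 1) * (if l = m then Complex.I else 1)) := by
      intro m
      have h := hdiag m (i,j) (k,l)
      rw [mul_comm (M (i,j) (k,l))] at h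
      exact mul_right_cancel₀ hne h
    by_cases hij : i = j
    · subst hij
      have h := hrel i
      rw [if_pos rfl, Complex.I_mul_I] at h
      by_cases hk : k = i <;> by_cases hl : l = i
      · exact hno (Or.inl ⟨hk, hl⟩)
      · rw [if_pos hk, if_neg hl, mul_one] at h; exact fn1I h
      · rw [if_neg hk, if_pos hl, one_mul] at h; exact fn1I h
      · rw [if_neg hk, if_neg hl, mul_one] at h; exact absurd h (by norm_num)
    · have hi := hrel i
      have hji : ¬ j = i := fun hc => hij hc.symm
      rw [if_pos rfl, if_neg hji, mul_one] at hi
      have hj := hrel j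
      rw [if_neg hij, if_pos rfl, one_mul] at hj
      by_cases hk : k = i <;> by_cases hl : l = i
      · rw [if_pos hk, if_pos hl, Complex.I_mul_I] at hi; exact fIn1 hi
      · -- k = i, l ≠ i
        have hkj : ¬ k = j := fun hc => hij (hk.symm.trans hc)
        rw [if_neg hkj, one_mul] at hj
        by_cases hl2 : l = j
        · exact hno (Or.inl ⟨hk, hl2⟩)
        · rw [if_neg hl2] at hj; exact fI1 hj
      · -- l = i, k ≠ i
        have hlj : ¬ l = j := fun hc => hij (hl.symm.trans hc)
        rw [if_neg hlj, mul_one] at hj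
        by_cases hk2 : k = j
        · exact hno (Or.inr ⟨hk2, hl⟩)
        · rw [if_neg hk2] at hj; exact fI1 hj
      · rw [if_neg hk, if_neg hl, mul_one] at hi; exact fI1 hi
  -- permutation invariance
  have hperm : ∀ (σ : Equiv.Perm a) (i j k l : a),
      M (σ i, σ j) (σ k, σ l) = M (i,j) (k,l) := by
    intro σ i j k l
    have h := congrFun (congrFun (hM (permU σ)) (σ i, σ j)) (k, l)
    have hL : (W ((permU σ : Matrix a a ℂ)) * M) (σ i, σ j) (k, l) = M (i,j) (k,l) := by
      rw [Matrix.mul_apply, Finset.sum_eq_single ((i,j) : a × a)]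
      · rw [permU_W_apply]; simp
      · rintro b - hb
        rw [permU_W_apply, if_neg, zero_mul]
        exact fun hc => hb (Prod.ext (σ.injective hc.1.symm) (σ.injective hc.2.symm))
      · simp
    have hR : (M * W ((permU σ : Matrix a a ℂ))) (σ i, σ j) (k, l) = M (σ i, σ j) (σ k, σ l) := by
      rw [Matrix.mul_apply, Finset.sum_eq_single ((σ k, σ l) : a × a)]
      · rw [permU_W_apply]; simp
      · rintro b - hb
        rw [permU_W_apply, if_neg, mul_zero]
        exact fun hc => hb (Prod.ext hc.1 hc.2)
      · simp
    rw [hL, hR] at h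
    exact h.symm
  -- Hadamard relation
  have hhadrel : M (a0,a0) (a0,a0) = M (a0,a1) (a0,a1) + M (a1,a0) (a0,a1) := by
    have hz1 : M (a0,a0) (a0,a1) = 0 := by
      refine hzero _ _ _ _ ?_
      rintro (⟨h1, h2⟩ | ⟨h1, h2⟩) <;>
        first | exact h01 h1 | exact h01 h1.symm | exact h01 h2 | exact h01 h2.symm
    have hz2 : M (a1,a1) (a0,a1) = 0 := by
      refine hzero _ _ _ _ ?_
      rintro (⟨h1, h2⟩ | ⟨h1, h2⟩) <;>
        first | exact h01 h1 | exact h01 h1.symm | exact h01 h2 | exact h01 h2.symm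
    have h := congrFun (congrFun (hM (hadU h01)) ((a0,a0) : a × a)) ((a0,a1) : a × a)
    have hrow : ∀ k, (hadU h01 : Matrix a a ℂ) a0 k
        = (if k = a0 then sC else if k = a1 then sC else 0) := by
      intro k; simp [hadU, hadM]
    have hL : (W ((hadU h01 : Matrix a a ℂ)) * M) (a0,a0) (a0,a1)
        = sC * (sC * M (a0,a0) (a0,a1) + sC * M (a0,a1) (a0,a1))
          + sC * (sC * M (a1,a0) (a0,a1) + sC * M (a1,a1) (a0,a1)) := by
      rw [Matrix.mul_apply, Fintype.sum_prod_type]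
      simp_rw [W_apply, hrow, mul_assoc, ← Finset.mul_sum, sum_two h01]
    have hR : (M * W ((hadU h01 : Matrix a a ℂ))) (a0,a0) (a0,a1)
        = M (a0,a0) (a0,a0) * (sC * sC) := by
      rw [Matrix.mul_apply, Finset.sum_eq_single ((a0,a0) : a × a)]
      · rw [W_apply]
        simp [hadU, hadM, Ne.symm h01]
      · rintro ⟨b1, b2⟩ - hb
        have hz : M (a0,a0) (b1,b2) = 0 := by
          refine hzero _ _ _ _ ?_
          rintro (⟨hx, hy⟩ | ⟨hx, hy⟩) <;> exact hb (by rw [hx, hy])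
        rw [hz, zero_mul]
      · simp
    rw [hL, hR, hz1, hz2] at h
    have hs : sC * sC ≠ 0 := mul_ne_zero sC_ne sC_ne
    have goal2 : (sC * sC) * M (a0,a0) (a0,a0)
        = (sC * sC) * (M (a0,a1) (a0,a1) + M (a1,a0) (a0,a1)) := by
      linear_combination -h
    exact mul_left_cancel₀ hs goal2
  -- permutation transitivity
  have hex : ∀ i j : a, i ≠ j → ∃ σ : Equiv.Perm a, σ a0 = i ∧ σ a1 = j := by
    intro i j hij
    refine ⟨(Equiv.swap ((Equiv.swap a0 i) a1) j) * (Equiv.swap a0 i), ?_, ?_⟩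
    · rw [Equiv.Perm.mul_apply, Equiv.swap_apply_left]
      refine Equiv.swap_apply_of_ne_of_ne ?_ hij
      intro hc
      exact h01 ((Equiv.swap a0 i).injective (by rw [Equiv.swap_apply_left, ← hc])).symm
    · rw [Equiv.Perm.mul_apply, Equiv.swap_apply_left]
  have hXX : ∀ i j : a, i ≠ j →
      M (i,j) (i,j) = M (a0,a1) (a0,a1) ∧ M (i,j) (j,i) = M (a0,a1) (a1,a0) := by
    intro i j hij
    obtain ⟨σ, h0, h1⟩ := hex i j hij
    constructor
    · have := hperm σ a0 a1 a0 a1; rw [h0, h1] at this; exact this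
    · have := hperm σ a0 a1 a1 a0; rw [h0, h1] at this; exact this
  have hdiagonal : ∀ i : a, M (i,i) (i,i) = M (a0,a1) (a0,a1) + M (a0,a1) (a1,a0) := by
    intro i
    have hσ := hperm (Equiv.swap a0 i) a0 a0 a0 a0
    rw [Equiv.swap_apply_left] at hσ
    have hy : M (a1,a0) (a0,a1) = M (a0,a1) (a1,a0) := by
      have := hperm (Equiv.swap a0 a1) a0 a1 a1 a0
      rw [Equiv.swap_apply_left, Equiv.swap_apply_right] at this
      exact this
    rw [hσ, hhadrel, hy]
  -- final assembly
  ext ⟨i, j⟩ ⟨k, l⟩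
  simp only [Matrix.add_apply, Matrix.smul_apply, Matrix.one_apply, swapM, Matrix.of_apply,
    smul_eq_mul]
  by_cases hij : i = j
  · rw [hij]
    by_cases hkl : k = j ∧ l = j
    · rw [hkl.1, hkl.2]
      simp [hdiagonal]
    · have hz : M (j,j) (k,l) = 0 := by
        refine hzero _ _ _ _ ?_
        rintro (⟨h1, h2⟩ | ⟨h1, h2⟩) <;> exact hkl ⟨h1, h2⟩
      have h1 : ¬(((j,j) : a × a) = (k,l)) := fun hc =>
        hkl ⟨((Prod.ext_iff).1 hc).1.symm, ((Prod.ext_iff).1 hc).2.symm⟩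
      have h2 : ¬(j = l ∧ j = k) := fun hc => hkl ⟨hc.2.symm, hc.1.symm⟩
      simp [hz, h1, h2]
  · by_cases hkl1 : k = i ∧ l = j
    · rw [hkl1.1, hkl1.2]
      simp [hij, (hXX i j hij).1]
    · by_cases hkl2 : k = j ∧ l = i
      · rw [hkl2.1, hkl2.2]
        have h1 : (((i,j) : a × a)) ≠ (j,i) := fun hc => hij ((Prod.ext_iff).1 hc).1
        simp [h1, (hXX i j hij).2]
      · have hz : M (i,j) (k,l) = 0 := by
          refine hzero _ _ _ _ ?_
          tauto
        have h1 : ¬(((i,j) : a × a) = (k,l)) := fun hc =>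
          hkl1 ⟨((Prod.ext_iff).1 hc).1.symm, ((Prod.ext_iff).1 hc).2.symm⟩
        have h2 : ¬(i = l ∧ j = k) := fun hc => hkl2 ⟨hc.2.symm, hc.1.symm⟩
        simp [hz, h1, h2]


lemma triple_apply (A B : Matrix (a × a) (a × a) ℂ) (p q : a × a) :
    (A * B * Aᴴ) p q = ∑ s, ∑ r, A p r * B r s * star (A q s) := by
  rw [Matrix.mul_apply]
  simp_rw [Matrix.conjTranspose_apply, Matrix.mul_apply, Finset.sum_mul]

lemma entry_meas (i j : a) :
    Measurable (fun U : Matrix.unitaryGroup a ℂ => (U : Matrix a a ℂ) i j) :=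
  (measurable_pi_apply j).comp ((measurable_pi_apply i).comp measurable_subtype_coe)

lemma entry_bound (U : Matrix.unitaryGroup a ℂ) (i j : a) :
    ‖(U : Matrix a a ℂ) i j‖ ≤ 1 := by
  have h := U.prop
  rw [Matrix.mem_unitaryGroup_iff] at h
  have h2 := congrFun (congrFun h i) i
  rw [Matrix.mul_apply, Matrix.one_apply_eq] at h2
  have h3 : ∑ k, ((Complex.normSq ((U : Matrix a a ℂ) i k) : ℂ)) = 1 := by
    rw [← h2]
    refine Finset.sum_congr rfl fun k _ => ?_
    rw [Matrix.star_apply, ← Complex.mul_conj]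
    rfl
  have h4 : ∑ k, Complex.normSq ((U : Matrix a a ℂ) i k) = 1 := by
    exact_mod_cast h3
  have h5 : Complex.normSq ((U : Matrix a a ℂ) i j) ≤ 1 := by
    rw [← h4]
    exact Finset.single_le_sum (fun k _ => Complex.normSq_nonneg _) (Finset.mem_univ j)
  have h6 : ‖(U : Matrix a a ℂ) i j‖ ^ 2 ≤ 1 := by
    rwa [← Complex.sq_norm] at h5
  nlinarith [norm_nonneg ((U : Matrix a a ℂ) i j)]

variable (Y : Matrix (a × a) (a × a) ℂ)

def gfun (U : Matrix.unitaryGroup a ℂ) : Matrix (a × a) (a × a) ℂ :=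
  W (U : Matrix a a ℂ) * Y * (W (U : Matrix a a ℂ))ᴴ

lemma gfun_meas (p q : a × a) : Measurable (fun U => gfun Y U p q) := by
  have : (fun U => gfun Y U p q)
      = fun U : Matrix.unitaryGroup a ℂ => ∑ s, ∑ r,
        W (U : Matrix a a ℂ) p r * Y r s * star (W (U : Matrix a a ℂ) q s) := by
    funext U
    exact triple_apply _ _ _ _
  rw [this]
  refine Finset.measurable_sum _ fun s _ => Finset.measurable_sum _ fun r _ => ?_
  have hW : ∀ x y : a × a, Measurable (fun U : Matrix.unitaryGroup a ℂ =>
      W (U : Matrix a a ℂ) x y) := fun x y =>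
    (entry_meas x.1 y.1).mul (entry_meas x.2 y.2)
  exact (((hW p r).mul_const _).mul (continuous_star.measurable.comp (hW q s)))

lemma gfun_bound (U : Matrix.unitaryGroup a ℂ) (p q : a × a) :
    ‖gfun Y U p q‖ ≤ ∑ s, ∑ r, ‖Y r s‖ := by
  rw [gfun, triple_apply]
  refine (norm_sum_le _ _).trans (Finset.sum_le_sum fun s _ => ?_)
  refine (norm_sum_le _ _).trans (Finset.sum_le_sum fun r _ => ?_)
  rw [norm_mul, norm_mul, norm_star]
  have hW : ∀ x y : a × a, ‖W (U : Matrix a a ℂ) x y‖ ≤ 1 := by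
    intro x y
    rw [W_apply, norm_mul]
    have hb1 := entry_bound U x.1 y.1
    have hb2 := entry_bound U x.2 y.2
    have h1 := norm_nonneg ((U : Matrix a a ℂ) x.1 y.1)
    have h2 := norm_nonneg ((U : Matrix a a ℂ) x.2 y.2)
    calc ‖(U : Matrix a a ℂ) x.1 y.1‖ * ‖(U : Matrix a a ℂ) x.2 y.2‖ ≤ 1 * 1 :=
      mul_le_mul hb1 hb2 h2 zero_le_one
    _ = 1 := by ring
  have h1 := hW p r
  have h2 := hW q s
  have h3 := norm_nonneg (Y r s)
  have h5 := norm_nonneg (W (U : Matrix a a ℂ) q s)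
  calc ‖W (U : Matrix a a ℂ) p r‖ * ‖Y r s‖ * ‖W (U : Matrix a a ℂ) q s‖
      ≤ 1 * ‖Y r s‖ * 1 := mul_le_mul (mul_le_mul h1 le_rfl h3 zero_le_one) h2 h5 (by positivity)
    _ = ‖Y r s‖ := by ring

lemma gfun_int (μ : Measure (Matrix.unitaryGroup a ℂ)) [IsProbabilityMeasure μ] (p q : a × a) :
    Integrable (fun U => gfun Y U p q) μ := by
  refine (integrable_const (∑ s, ∑ r, ‖Y r s‖)).mono'
    (gfun_meas Y p q).aestronglyMeasurable (ae_of_all _ fun U => gfun_bound Y U p q)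

lemma mul_meas (V : Matrix.unitaryGroup a ℂ) :
    Measurable (fun U : Matrix.unitaryGroup a ℂ => V * U) := by
  refine Measurable.subtype_mk ?_
  refine measurable_pi_lambda _ fun i => measurable_pi_lambda _ fun j => ?_
  simp_rw [Matrix.mul_apply]
  exact Finset.measurable_sum _ fun k _ => measurable_const.mul (entry_meas k j)

def mulLeftE (V : Matrix.unitaryGroup a ℂ) :
    Matrix.unitaryGroup a ℂ ≃ᵐ Matrix.unitaryGroup a ℂ where
  toEquiv := Equiv.mulLeft V
  measurable_toFun := mul_meas V
  measurable_invFun := mul_meas V⁻¹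

lemma trace_conj (U : Matrix.unitaryGroup a ℂ) (Z : Matrix (a × a) (a × a) ℂ) :
    (W (U : Matrix a a ℂ) * Z * (W (U : Matrix a a ℂ))ᴴ).trace = Z.trace := by
  rw [Matrix.trace_mul_cycle, W_unitary_left, Matrix.one_mul]

lemma mInt_invariant (μ : Measure (Matrix.unitaryGroup a ℂ)) [IsProbabilityMeasure μ]
    (hinv : ∀ V : Matrix.unitaryGroup a ℂ,
      MeasureTheory.MeasurePreserving (fun U => V * U) μ μ)
    (V : Matrix.unitaryGroup a ℂ) :
    W (V : Matrix a a ℂ) * mInt μ (gfun Y) * (W (V : Matrix a a ℂ))ᴴ = mInt μ (gfun Y) := by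
  ext p q
  rw [triple_apply]
  have hterm : ∀ s r : a × a,
      W (V : Matrix a a ℂ) p r * mInt μ (gfun Y) r s * star (W (V : Matrix a a ℂ) q s)
      = ∫ U, W (V : Matrix a a ℂ) p r * gfun Y U r s * star (W (V : Matrix a a ℂ) q s) ∂μ := by
    intro s r
    have h1 : mInt μ (gfun Y) r s = ∫ U, gfun Y U r s ∂μ := rfl
    rw [h1, ← MeasureTheory.integral_const_mul, ← MeasureTheory.integral_mul_const]
  simp_rw [hterm]
  have hint2 : ∀ s r : a × a, Integrable
      (fun U => W (V : Matrix a a ℂ) p r * gfun Y U r s * star (W (V : Matrix a a ℂ) q s)) μ :=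
    fun s r => ((gfun_int Y μ r s).const_mul _).mul_const _
  have h2 : ∀ s : a × a,
      (∑ r, ∫ U, W (V : Matrix a a ℂ) p r * gfun Y U r s * star (W (V : Matrix a a ℂ) q s) ∂μ)
      = ∫ U, ∑ r, W (V : Matrix a a ℂ) p r * gfun Y U r s * star (W (V : Matrix a a ℂ) q s) ∂μ :=
    fun s => (integral_finset_sum _ (fun r _ => hint2 s r)).symm
  simp_rw [h2]
  rw [← integral_finset_sum _ (fun s _ => integrable_finset_sum _ (fun r _ => hint2 s r))]
  have h3 : ∀ U : Matrix.unitaryGroup a ℂ,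
      (∑ s, ∑ r, W (V : Matrix a a ℂ) p r * gfun Y U r s * star (W (V : Matrix a a ℂ) q s))
      = gfun Y (V * U) p q := by
    intro U
    rw [← triple_apply]
    have hh : W (V : Matrix a a ℂ) * gfun Y U * (W (V : Matrix a a ℂ))ᴴ = gfun Y (V * U) := by
      rw [gfun, gfun, MulMemClass.coe_mul, W_mul, Matrix.conjTranspose_mul]
      simp only [Matrix.mul_assoc]
    rw [hh]
  simp_rw [h3]
  exact (hinv V).integral_comp (mulLeftE V).measurableEmbedding (fun U => gfun Y U p q)

lemma mInt_trace (μ : Measure (Matrix.unitaryGroup a ℂ)) [IsProbabilityMeasure μ] :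
    (mInt μ (gfun Y)).trace = Y.trace := by
  have hd : ∀ p : a × a, mInt μ (gfun Y) p p = ∫ U, gfun Y U p p ∂μ := fun p => rfl
  rw [Matrix.trace]
  simp_rw [Matrix.diag_apply, hd]
  rw [← integral_finset_sum _ (fun p _ => gfun_int Y μ p p)]
  have htr : ∀ U : Matrix.unitaryGroup a ℂ, (∑ p : a × a, gfun Y U p p) = Y.trace := by
    intro U
    have h := trace_conj U Y
    rw [← h]
    rfl
  simp_rw [htr]
  simp [measure_univ]

lemma mInt_trace_swap (μ : Measure (Matrix.unitaryGroup a ℂ)) [IsProbabilityMeasure μ] :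
    (mInt μ (gfun Y) * swapM a).trace = (Y * swapM a).trace := by
  rw [mul_swap, Matrix.trace]
  have hd : ∀ p : a × a, mInt μ (gfun Y) p (p.2, p.1) = ∫ U, gfun Y U p (p.2, p.1) ∂μ :=
    fun p => rfl
  simp_rw [Matrix.diag_apply, Matrix.of_apply, hd]
  rw [← integral_finset_sum _ (fun p _ => gfun_int Y μ p (p.2, p.1))]
  have hpt : ∀ U : Matrix.unitaryGroup a ℂ,
      (∑ p : a × a, gfun Y U p (p.2, p.1)) = (Y * swapM a).trace := by
    intro U
    have h1 : gfun Y U * swapM a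
        = W (U : Matrix a a ℂ) * (Y * swapM a) * (W (U : Matrix a a ℂ))ᴴ := by
      rw [gfun]
      have hsw : (W (U : Matrix a a ℂ))ᴴ * swapM a = swapM a * (W (U : Matrix a a ℂ))ᴴ := by
        rw [W_conjT]
        exact (swap_comm_kron _).symm
      calc W (U : Matrix a a ℂ) * Y * (W (U : Matrix a a ℂ))ᴴ * swapM a
          = W (U : Matrix a a ℂ) * Y * ((W (U : Matrix a a ℂ))ᴴ * swapM a) := by
            rw [Matrix.mul_assoc]
        _ = W (U : Matrix a a ℂ) * Y * (swapM a * (W (U : Matrix a a ℂ))ᴴ) := by rw [hsw]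
        _ = W (U : Matrix a a ℂ) * (Y * swapM a) * (W (U : Matrix a a ℂ))ᴴ := by
            simp only [Matrix.mul_assoc]
    have h2 : (gfun Y U * swapM a).trace = (Y * swapM a).trace := by rw [h1, trace_conj]
    rw [← h2, mul_swap, Matrix.trace]
    simp [Matrix.diag_apply]
  simp_rw [hpt]
  simp [measure_univ]

end Tw



/-- Averaging `U ⊗ U` conjugation over the Haar (probability, left-invariant)
measure on the unitary group of a `d`-dimensional space sends any `Y` to `α • 1 + β • F`,
with `α d² + β d = Tr[Y]` and `α d + β d² = Tr[Y F]`. -/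
theorem haar_average_twirl {a : Type*} [Fintype a] [DecidableEq a]
    (hd : 1 ≤ Fintype.card a)
    (μ : MeasureTheory.Measure (Matrix.unitaryGroup a ℂ)) [MeasureTheory.IsProbabilityMeasure μ]
    (hinv : ∀ V : Matrix.unitaryGroup a ℂ,
      MeasureTheory.MeasurePreserving (fun U => V * U) μ μ)
    (Y : Matrix (a × a) (a × a) ℂ) :
    ∃ α β : ℂ,
      mInt μ (fun U => ((U : Matrix a a ℂ) ⊗ₖ (U : Matrix a a ℂ)) * Y *
          (((U : Matrix a a ℂ) ⊗ₖ (U : Matrix a a ℂ))ᴴ)) =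
        α • (1 : Matrix (a × a) (a × a) ℂ) + β • swapM a ∧
      α * (Fintype.card a : ℂ) ^ 2 + β * (Fintype.card a : ℂ) = Y.trace ∧
      α * (Fintype.card a : ℂ) + β * (Fintype.card a : ℂ) ^ 2 = (Y * swapM a).trace := by
  have hMg : mInt μ (fun U => ((U : Matrix a a ℂ) ⊗ₖ (U : Matrix a a ℂ)) * Y *
      (((U : Matrix a a ℂ) ⊗ₖ (U : Matrix a a ℂ))ᴴ)) = mInt μ (Tw.gfun Y) := rfl
  rw [hMg]
  set M := mInt μ (Tw.gfun Y) with hMdef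
  rcases eq_or_lt_of_le hd with h1 | h2
  · -- one-dimensional case
    haveI : Subsingleton a := Fintype.card_le_one_iff_subsingleton.mp (le_of_eq h1.symm)
    have hF1 : swapM a = (1 : Matrix (a × a) (a × a) ℂ) := by
      ext p q
      have hpq : p = q := Subsingleton.elim _ _
      subst hpq
      have h12 : p.1 = p.2 := Subsingleton.elim _ _
      simp [swapM, Matrix.one_apply, h12]
    refine ⟨0, Y.trace, ?_, ?_, ?_⟩
    · rw [hF1]
      ext p q
      have hpq : p = q := Subsingleton.elim _ _
      subst hpq
      have hM1 : M p p = M.trace := by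
        have hs : ∑ b : a × a, M.diag b = M.diag p :=
          Finset.sum_eq_single p (fun b _ hb => absurd (Subsingleton.elim b p) hb)
            (fun h => absurd (Finset.mem_univ p) h)
        rw [Matrix.trace, hs, Matrix.diag_apply]
      rw [hM1, Tw.mInt_trace]
      simp [Matrix.add_apply, Matrix.smul_apply, Matrix.one_apply]
    · rw [← h1]
      norm_num
    · rw [hF1, Matrix.mul_one, ← h1]
      norm_num
  · obtain ⟨a0, a1, h01⟩ := Fintype.exists_pair_of_one_lt_card h2
    have hcomm : ∀ V : Matrix.unitaryGroup a ℂ,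
        Tw.W (V : Matrix a a ℂ) * M = M * Tw.W (V : Matrix a a ℂ) := by
      intro V
      have h := Tw.mInt_invariant Y μ hinv V
      rw [← hMdef] at h
      calc Tw.W (V : Matrix a a ℂ) * M
          = Tw.W (V : Matrix a a ℂ) * M * ((Tw.W (V : Matrix a a ℂ))ᴴ * Tw.W (V : Matrix a a ℂ)) := by
            rw [Tw.W_unitary_left, Matrix.mul_one]
        _ = (Tw.W (V : Matrix a a ℂ) * M * (Tw.W (V : Matrix a a ℂ))ᴴ) * Tw.W (V : Matrix a a ℂ) := by
            simp only [Matrix.mul_assoc]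
        _ = M * Tw.W (V : Matrix a a ℂ) := by rw [h]
    set α := M (a0, a1) (a0, a1) with hα
    set β := M (a0, a1) (a1, a0) with hβ
    have hstruct : M = α • (1 : Matrix (a × a) (a × a) ℂ) + β • swapM a :=
      Tw.comm_structure h01 hcomm
    refine ⟨α, β, hstruct, ?_, ?_⟩
    · have ht : M.trace = Y.trace := Tw.mInt_trace Y μ
      rw [← ht, hstruct, Matrix.trace_add, Matrix.trace_smul, Matrix.trace_smul,
        Matrix.trace_one, Tw.swap_trace, Fintype.card_prod]
      push_cast
      simp only [smul_eq_mul]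
      ring
    · have htF : (M * swapM a).trace = (Y * swapM a).trace := Tw.mInt_trace_swap Y μ
      rw [← htF, hstruct, Matrix.add_mul, Matrix.smul_mul, Matrix.smul_mul, Matrix.one_mul,
        Tw.swap_mul_swap, Matrix.trace_add, Matrix.trace_smul, Matrix.trace_smul,
        Matrix.trace_one, Tw.swap_trace, Fintype.card_prod]
      push_cast
      simp only [smul_eq_mul]
      ring


end
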